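/- Let k ≥ 2 and let (r₀,s₀),…,(r_k,s_k) ∈ ℝ². Define χ_{r,s}(t) := (t^r − t^s)/(r−s) if r ≠ s and χ_{r,s}(t) := t^r ln t if r = s, for t > 0. Assume that for all z ∈ ℝ₊^k and all t₁,…,t_k ∈ [0,1] with t₁+⋯+t_k = 1: χ_{r₀,s₀}(t₁z₁+⋯+t_k z_k) ≤ ∑_{j=1}^k t_j χ_{r_j,s_j}(z_j). Then for all n ∈ ℕ, all λ ∈ ℝ₊ⁿ with ∑λᵢ = 1, and all x ∈ ℝ₊^{n×k}: G_{r₀,s₀;λ}(x₁¹+⋯+x₁^k, …, xₙ¹+⋯+xₙ^k) ≤ G_{r₁,s₁;λ}(x¹) + ⋯ + G_{r_k,s_k;λ}(x^k), where x^j is the j-th column and xᵢ the i-th row of x. -/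

import Mathlib

open Finset

/-- The weighted Gini mean `G_{r,s;λ}` (both cases `r ≠ s` and `r = s`). -/
noncomputable def giniMean {n : ℕ} (r s : ℝ) (l : Fin n → ℝ) (x : Fin n → ℝ) : ℝ :=
  if r = s then
    Real.exp ((∑ i, l i * x i ^ r * Real.log (x i)) / ∑ i, l i * x i ^ r)
  else ((∑ i, l i * x i ^ r) / (∑ i, l i * x i ^ s)) ^ ((r - s)⁻¹)

/-- The auxiliary function `χ_{r,s}`. -/
noncomputable def chi (r s t : ℝ) : ℝ :=
  if r = s then t ^ r * Real.log t else (t ^ r - t ^ s) / (r - s)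

section Aux

variable {n : ℕ}

lemma aux_sum_pos (hn : 0 < n) (l : Fin n → ℝ) (hl : ∀ i, 0 < l i)
    (f : Fin n → ℝ) (hf : ∀ i, 0 < f i) : 0 < ∑ i, l i * f i :=
  Finset.sum_pos (fun i _ => mul_pos (hl i) (hf i))
    (Finset.univ_nonempty_iff.mpr (Fin.pos_iff_nonempty.mp hn))

lemma giniMean_pos (hn : 0 < n) (r s : ℝ) (l : Fin n → ℝ) (y : Fin n → ℝ)
    (hl : ∀ i, 0 < l i) (hy : ∀ i, 0 < y i) : 0 < giniMean r s l y := by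
  unfold giniMean
  split_ifs
  · exact Real.exp_pos _
  · exact Real.rpow_pos_of_pos (div_pos
      (aux_sum_pos hn l hl _ (fun i => Real.rpow_pos_of_pos (hy i) r))
      (aux_sum_pos hn l hl _ (fun i => Real.rpow_pos_of_pos (hy i) s))) _

/-- Rewriting of the weighted `chi`-sum at scale `c`. -/
lemma chi_sum_rw (r s c : ℝ) (hc : 0 < c) (l : Fin n → ℝ) (y : Fin n → ℝ)
    (hy : ∀ i, 0 < y i) :
    ∑ i, l i * chi r s (y i / c) =
      if r = s then
        ((∑ i, l i * y i ^ r * Real.log (y i)) - (∑ i, l i * y i ^ r) * Real.log c) / c ^ r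
      else ((∑ i, l i * y i ^ r) / c ^ r - (∑ i, l i * y i ^ s) / c ^ s) / (r - s) := by
  unfold chi
  split_ifs with h
  · subst h
    have e : ∀ i : Fin n, l i * ((y i / c) ^ r * Real.log (y i / c)) =
        l i * y i ^ r * Real.log (y i) / c ^ r - l i * y i ^ r * Real.log c / c ^ r := by
      intro i
      rw [Real.div_rpow (hy i).le hc.le, Real.log_div (hy i).ne' hc.ne']
      have hcr : (0:ℝ) < c ^ r := Real.rpow_pos_of_pos hc r
      field_simp
    simp_rw [e]
    rw [Finset.sum_sub_distrib, ← Finset.sum_div, ← Finset.sum_div, ← Finset.sum_mul, ← sub_div]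
  · have e : ∀ i : Fin n, l i * (((y i / c) ^ r - (y i / c) ^ s) / (r - s)) =
        (l i * y i ^ r / c ^ r - l i * y i ^ s / c ^ s) / (r - s) := by
      intro i
      rw [Real.div_rpow (hy i).le hc.le, Real.div_rpow (hy i).le hc.le]
      ring
    simp_rw [e]
    rw [← Finset.sum_div, Finset.sum_sub_distrib, ← Finset.sum_div, ← Finset.sum_div]

/-- At `c = giniMean r s l y`, the weighted `chi`-sum vanishes. -/
lemma chi_sum_eq (hn : 0 < n) (r s : ℝ) (l : Fin n → ℝ) (y : Fin n → ℝ)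
    (hl : ∀ i, 0 < l i) (hy : ∀ i, 0 < y i) :
    ∑ i, l i * chi r s (y i / giniMean r s l y) = 0 := by
  have hc : 0 < giniMean r s l y := giniMean_pos hn r s l y hl hy
  set A : ℝ := ∑ i, l i * y i ^ r with hA
  set B : ℝ := ∑ i, l i * y i ^ s with hB
  set L : ℝ := ∑ i, l i * y i ^ r * Real.log (y i) with hL
  have hApos : 0 < A := aux_sum_pos hn l hl _ (fun i => Real.rpow_pos_of_pos (hy i) r)
  have hBpos : 0 < B := aux_sum_pos hn l hl _ (fun i => Real.rpow_pos_of_pos (hy i) s)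
  rw [chi_sum_rw r s _ hc l y hy]
  unfold giniMean
  split_ifs with h
  · rw [Real.log_exp]
    rw [div_eq_zero_iff]
    left
    field_simp
    have hA' : (∑ x, l x * y x ^ r) ≠ 0 := hApos.ne'
    rw [div_self hA', sub_self, mul_zero]
  · have hrs : r - s ≠ 0 := sub_ne_zero.mpr h
    have hkey : ((A / B) ^ (r - s)⁻¹ : ℝ) ^ (r - s) = A / B :=
      Real.rpow_inv_rpow (div_pos hApos hBpos).le hrs
    set c : ℝ := (A / B) ^ (r - s)⁻¹ with hcdef
    have hc0 : (0:ℝ) < c := Real.rpow_pos_of_pos (div_pos hApos hBpos) _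
    have hcr : c ^ r = c ^ s * (A / B) := by
      rw [← hkey, ← Real.rpow_add hc0]; ring_nf
    rw [div_eq_zero_iff]
    left
    rw [sub_eq_zero, hcr]
    have hcs : (0:ℝ) < c ^ s := Real.rpow_pos_of_pos hc0 s
    field_simp
    ring
  
/-- If the weighted `chi`-sum at scale `c > 0` is nonpositive, then `giniMean ≤ c`. -/
lemma giniMean_le (hn : 0 < n) (r s : ℝ) (l : Fin n → ℝ) (y : Fin n → ℝ)
    (hl : ∀ i, 0 < l i) (hy : ∀ i, 0 < y i) (c : ℝ) (hc : 0 < c)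
    (h : ∑ i, l i * chi r s (y i / c) ≤ 0) : giniMean r s l y ≤ c := by
  set A : ℝ := ∑ i, l i * y i ^ r with hA
  set B : ℝ := ∑ i, l i * y i ^ s with hB
  set L : ℝ := ∑ i, l i * y i ^ r * Real.log (y i) with hL
  have hApos : 0 < A := aux_sum_pos hn l hl _ (fun i => Real.rpow_pos_of_pos (hy i) r)
  have hBpos : 0 < B := aux_sum_pos hn l hl _ (fun i => Real.rpow_pos_of_pos (hy i) s)
  rw [chi_sum_rw r s c hc l y hy] at h
  unfold giniMean
  split_ifs at h ⊢ with hrs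
  · -- r = s
    have hcr : (0:ℝ) < c ^ r := Real.rpow_pos_of_pos hc r
    rw [div_nonpos_iff] at h
    have h2 : L - A * Real.log c ≤ 0 := by
      rcases h with ⟨h1, h2⟩ | ⟨h1, h2⟩
      · linarith
      · exact h1
    have : L / A ≤ Real.log c := by
      rw [div_le_iff₀ hApos]; linarith
    calc Real.exp (L / A) ≤ Real.exp (Real.log c) := Real.exp_le_exp.mpr this
      _ = c := Real.exp_log hc
  · -- r ≠ s
    have hsub : r - s ≠ 0 := sub_ne_zero.mpr hrs
    have hcr : (0:ℝ) < c ^ r := Real.rpow_pos_of_pos hc r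
    have hcs : (0:ℝ) < c ^ s := Real.rpow_pos_of_pos hc s
    have hAB : 0 < A / B := div_pos hApos hBpos
    have hcrs : c ^ (r - s) = c ^ r / c ^ s := Real.rpow_sub hc r s
    rcases lt_or_gt_of_ne hrs with hlt | hgt
    · -- r < s, so r - s < 0
      have hneg : r - s < 0 := by linarith
      have h2 : B / c ^ s ≤ A / c ^ r := by
        rw [div_nonpos_iff] at h
        rcases h with ⟨h1, h2⟩ | ⟨h1, h2⟩
        · linarith
        · linarith
      have h3 : c ^ (r - s) ≤ A / B := by
        rw [hcrs, div_le_div_iff₀ hcs hBpos]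
        rw [div_le_div_iff₀ hcs hcr] at h2
        nlinarith
      calc (A / B) ^ (r - s)⁻¹ ≤ (c ^ (r - s)) ^ (r - s)⁻¹ :=
            Real.rpow_le_rpow_of_nonpos (Real.rpow_pos_of_pos hc _) h3
              (inv_nonpos.mpr hneg.le)
        _ = c := Real.rpow_rpow_inv hc.le hsub
    · -- r > s
      have hpos : 0 < r - s := by linarith
      have h2 : A / c ^ r ≤ B / c ^ s := by
        rw [div_nonpos_iff] at h
        rcases h with ⟨h1, h2⟩ | ⟨h1, h2⟩
        · linarith
        · linarith
      have h3 : A / B ≤ c ^ (r - s) := by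
        rw [hcrs, div_le_div_iff₀ hBpos hcs]
        rw [div_le_div_iff₀ hcr hcs] at h2
        nlinarith
      calc (A / B) ^ (r - s)⁻¹ ≤ (c ^ (r - s)) ^ (r - s)⁻¹ :=
            Real.rpow_le_rpow hAB.le h3 (inv_nonneg.mpr hpos.le)
        _ = c := Real.rpow_rpow_inv hc.le hsub

end Aux

/-- If `χ_{r₀,s₀}(∑ tⱼzⱼ) ≤ ∑ tⱼ χ_{rⱼ,sⱼ}(zⱼ)` for all positive `z` and
all convex weights `t`, then the Minkowski-type inequality
`G_{r₀,s₀;λ}(∑ⱼ x₁^j,…,∑ⱼ xₙ^j) ≤ ∑ⱼ G_{rⱼ,sⱼ;λ}(x^j)` holds globally on `ℝ₊^{n×k}`. -/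
theorem gini_minkowski_global
    (k : ℕ) (hk : 2 ≤ k) (r s : Fin (k + 1) → ℝ)
    (key : ∀ z : Fin k → ℝ, (∀ j, 0 < z j) →
      ∀ t : Fin k → ℝ, (∀ j, t j ∈ Set.Icc (0 : ℝ) 1) → ∑ j, t j = 1 →
        chi (r 0) (s 0) (∑ j, t j * z j) ≤ ∑ j, t j * chi (r j.succ) (s j.succ) (z j))
    (n : ℕ) (l : Fin n → ℝ) (hl : ∀ i, 0 < l i) (hl1 : ∑ i, l i = 1)
    (x : Fin n → Fin k → ℝ) (hx : ∀ i j, 0 < x i j) :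
    giniMean (r 0) (s 0) l (fun i => ∑ j, x i j) ≤
      ∑ j, giniMean (r j.succ) (s j.succ) l (fun i => x i j) := by
  have hn : 0 < n := by
    rcases Nat.eq_zero_or_pos n with h | h
    · subst h; simp at hl1
    · exact h
  have hk0 : 0 < k := by omega
  set c : Fin k → ℝ := fun j => giniMean (r j.succ) (s j.succ) l (fun i => x i j) with hc
  have hcpos : ∀ j, 0 < c j := fun j =>
    giniMean_pos hn _ _ l _ hl (fun i => hx i j)
  set C : ℝ := ∑ j, c j with hC
  have hCpos : 0 < C := Finset.sum_pos (fun j _ => hcpos j)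
    (Finset.univ_nonempty_iff.mpr (Fin.pos_iff_nonempty.mp hk0))
  have hcleC : ∀ j, c j ≤ C := fun j =>
    Finset.single_le_sum (fun m _ => (hcpos m).le) (Finset.mem_univ j)
  refine giniMean_le hn _ _ l _ hl
    (fun i => Finset.sum_pos (fun j _ => hx i j)
      (Finset.univ_nonempty_iff.mpr (Fin.pos_iff_nonempty.mp hk0))) C hCpos ?_
  have hmain : ∀ i, chi (r 0) (s 0) ((∑ j, x i j) / C) ≤
      ∑ j, (c j / C) * chi (r j.succ) (s j.succ) (x i j / c j) := by
    intro i
    have hkey := key (fun j => x i j / c j) (fun j => div_pos (hx i j) (hcpos j))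
      (fun j => c j / C)
      (fun j => ⟨(div_pos (hcpos j) hCpos).le, (div_le_one hCpos).mpr (hcleC j)⟩)
      (by rw [← Finset.sum_div, div_self hCpos.ne'])
    have hsum : ∑ j, (c j / C) * (x i j / c j) = (∑ j, x i j) / C := by
      rw [Finset.sum_div]
      refine Finset.sum_congr rfl fun j _ => ?_
      rw [div_mul_div_comm, mul_comm C (c j), mul_div_mul_left _ _ (hcpos j).ne']
    rwa [hsum] at hkey
  calc ∑ i, l i * chi (r 0) (s 0) ((∑ j, x i j) / C)
      ≤ ∑ i, l i * ∑ j, (c j / C) * chi (r j.succ) (s j.succ) (x i j / c j) :=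
        Finset.sum_le_sum (fun i _ => mul_le_mul_of_nonneg_left (hmain i) (hl i).le)
    _ = ∑ j, (c j / C) * ∑ i, l i * chi (r j.succ) (s j.succ) (x i j / c j) := by
        simp_rw [Finset.mul_sum]
        rw [Finset.sum_comm]
        refine Finset.sum_congr rfl fun j _ => Finset.sum_congr rfl fun i _ => by ring
    _ = 0 := by
        refine Finset.sum_eq_zero fun j _ => ?_
        rw [chi_sum_eq hn _ _ l _ hl (fun i => hx i j), mul_zero]
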